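/- Let F be any field, G any finite group, X a finite transitive G-set, and f a nonzero element of the permutation module F X. The equality |supp(f)| · dim_F (F G·f) = |X| holds if and only if: S := supp(f) is a block of X, so that for a fixed x₀ ∈ S the preimage 𝒮 = ζ_{x₀}⁻¹(S) is a subgroup of G, and there exists a group homomorphism η: 𝒮 → Fˣ such that β·f = η(β)·f for all β ∈ 𝒮. -/

import Mathlib

open Pointwise

lemma supp_rho {G X F : Type*} [Group G] [MulAction G X] [Field F] [DecidableEq X]
    (α : G) (f : X →₀ F) :
    (Finsupp.lmapDomain F F (fun x : X => α • x) f).support = α • f.support := by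
  show (Finsupp.mapDomain (fun x => α • x) f).support = _
  rw [Finsupp.mapDomain_support_of_injective (MulAction.injective α)]
  rw [Finset.smul_finset_def]

lemma li_of_disjoint {X F : Type*} [Field F] (s : Finset (X →₀ F))
    (h0 : (0 : X →₀ F) ∉ s)
    (hd : ∀ v ∈ s, ∀ w ∈ s, v ≠ w → Disjoint v.support w.support) :
    LinearIndependent F (Subtype.val : {x // x ∈ (s : Set (X →₀ F))} → X →₀ F) := by
  classical
  rw [Fintype.linearIndependent_iff]
  intro g hg i
  obtain ⟨v, hv⟩ := i
  have hvne : v ≠ 0 := fun h => h0 (h ▸ hv)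
  obtain ⟨x, hx⟩ := Finsupp.support_nonempty_iff.2 hvne
  have h2 := congrArg (fun u : X →₀ F => u x) hg
  simp only [Finsupp.coe_zero, Pi.zero_apply] at h2
  rw [Finsupp.finset_sum_apply] at h2
  have h3 : ∀ j : {x // x ∈ (s : Set (X →₀ F))}, j ∈ Finset.univ →
      j ≠ ⟨v, hv⟩ → (g j • (j : X →₀ F)) x = 0 := by
    intro j _ hj
    have hne : (j : X →₀ F) ≠ v := by
      intro h; exact hj (Subtype.ext h)
    have hdj := hd j j.2 v hv hne
    have hxnot : x ∉ (j : X →₀ F).support :=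
      Finset.disjoint_left.1 hdj.symm hx
    rw [Finsupp.smul_apply, Finsupp.notMem_support_iff.1 hxnot, smul_zero]
  rw [Finset.sum_eq_single ⟨v, hv⟩ h3 (fun h => absurd (Finset.mem_univ _) h)] at h2
  rw [Finsupp.smul_apply, smul_eq_mul] at h2
  exact (mul_eq_zero.1 h2).resolve_right (Finsupp.mem_support_iff.1 hx)

lemma disj_of_card {ι X : Type*} [DecidableEq X] [DecidableEq ι] (s : Finset ι) (t : ι → Finset X)
    (h : (s.biUnion t).card = ∑ i ∈ s, (t i).card) :
    ∀ i ∈ s, ∀ j ∈ s, i ≠ j → Disjoint (t i) (t j) := by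
  classical
  induction s using Finset.induction_on with
  | empty => simp
  | @insert a s ha ih =>
    rw [Finset.biUnion_insert, Finset.sum_insert ha] at h
    have h1 : ((t a) ∪ s.biUnion t).card ≤ (t a).card + (s.biUnion t).card :=
      Finset.card_union_le _ _
    have h2 : (s.biUnion t).card ≤ ∑ i ∈ s, (t i).card := Finset.card_biUnion_le
    have h3 : (s.biUnion t).card = ∑ i ∈ s, (t i).card := by omega
    have h4 : ((t a) ∪ s.biUnion t).card = (t a).card + (s.biUnion t).card := by omega
    have hdisj : Disjoint (t a) (s.biUnion t) := Finset.card_union_eq_card_add_card.1 h4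
    intro i hi j hj hij
    rcases Finset.mem_insert.1 hi with rfl | hi'
    · rcases Finset.mem_insert.1 hj with rfl | hj'
      · exact absurd rfl hij
      · exact hdisj.mono_right (Finset.subset_biUnion_of_mem t hj')
    · rcases Finset.mem_insert.1 hj with rfl | hj'
      · exact (hdisj.mono_right (Finset.subset_biUnion_of_mem t hi')).symm
      · exact ih h3 i hi' j hj' hij

theorem stmt11 {G X F : Type*} [Group G] [Fintype G] [MulAction G X] [Fintype X]
    [MulAction.IsPretransitive G X] [Field F]
    (f : X →₀ F) (hf : f ≠ 0) :
    f.support.card *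
        Module.finrank F (Submodule.span F
          (Set.range fun α : G => (Representation.ofMulAction F G X α (MonoidAlgebra.ofCoeff f)).coeff))
      = Fintype.card X ↔
    ((∀ α β : G, α • (f.support : Set X) = β • (f.support : Set X) ∨
        (α • (f.support : Set X)) ∩ (β • (f.support : Set X)) = ∅) ∧
      ∀ x₀ : X, f x₀ ≠ 0 →
        ∃ η : G → Fˣ,
          (∀ β γ : G, β • x₀ ∈ (f.support : Set X) → γ • x₀ ∈ (f.support : Set X) →
            η (β * γ) = η β * η γ) ∧
          ∀ β : G, β • x₀ ∈ (f.support : Set X) →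
            (Representation.ofMulAction F G X β (MonoidAlgebra.ofCoeff f)).coeff = (η β : F) • f) := by
  classical
  let ρ : G → ((X →₀ F) →ₗ[F] (X →₀ F)) := fun α => Finsupp.lmapDomain F F (fun x : X => α • x)
  change f.support.card *
        Module.finrank F (Submodule.span F
          (Set.range fun α : G => ρ α f))
      = Fintype.card X ↔
    ((∀ α β : G, α • (f.support : Set X) = β • (f.support : Set X) ∨
        (α • (f.support : Set X)) ∩ (β • (f.support : Set X)) = ∅) ∧
      ∀ x₀ : X, f x₀ ≠ 0 →
        ∃ η : G → Fˣ,
          (∀ β γ : G, β • x₀ ∈ (f.support : Set X) → γ • x₀ ∈ (f.support : Set X) →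
            η (β * γ) = η β * η γ) ∧
          ∀ β : G, β • x₀ ∈ (f.support : Set X) →
            ρ β f = (η β : F) • f)
  set S := f.support with hSdef
  have hSne : S.Nonempty := Finsupp.support_nonempty_iff.2 hf
  have hs0 : S.card ≠ 0 := Finset.card_ne_zero.2 hSne
  have hsupp : ∀ α : G, (ρ α f).support = α • S := fun α => supp_rho α f
  have hρmul : ∀ α β : G, ρ (α * β) f = ρ α (ρ β f) := by
    intro α β
    show Finsupp.mapDomain _ f = Finsupp.mapDomain _ (Finsupp.mapDomain _ f)
    rw [← Finsupp.mapDomain_comp]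
    congr 1; funext x; exact mul_smul α β x
  have hρone : ρ 1 f = f := by
    show Finsupp.mapDomain _ f = f
    have h1 : (fun x : X => (1 : G) • x) = id := funext fun x => one_smul G x
    rw [h1, Finsupp.mapDomain_id]
  have hcancel : ∀ a b : Fˣ, (a : F) • f = (b : F) • f → a = b := by
    intro a b hab
    exact Units.ext (smul_left_injective F hf hab)
  constructor
  · intro h
    obtain ⟨b, hbsub, hbspan, hbli⟩ := exists_linearIndependent F (Set.range fun α : G => ρ α f)
    have hbfin : b.Finite := (Set.finite_range _).subset hbsub
    set B := hbfin.toFinset with hBdef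
    have hBcoe : (B : Set (X →₀ F)) = b := hbfin.coe_toFinset
    have hBsub : ∀ v ∈ B, ∃ α : G, ρ α f = v := by
      intro v hv
      have hvb : v ∈ b := by rw [← hBcoe]; exact hv
      exact hbsub hvb
    have hBli : LinearIndependent F (Subtype.val : {x // x ∈ (B : Set (X →₀ F))} → X →₀ F) := by
      rw [hBcoe]; exact hbli
    have hrank : Module.finrank F (Submodule.span F (Set.range fun α : G => ρ α f)) = B.card := by
      rw [← hbspan, ← hBcoe]
      exact finrank_span_finset_eq_card hBli
    rw [hrank] at h
    have hcardB : ∀ v ∈ B, v.support.card = S.card := by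
      intro v hv
      obtain ⟨α, hα⟩ := hBsub v hv
      rw [← hα, hsupp, Finset.card_smul_finset]
    have hmem : ∀ α : G, ρ α f ∈ Submodule.span F (B : Set (X →₀ F)) := by
      intro α
      rw [hBcoe, hbspan]
      exact Submodule.subset_span ⟨α, rfl⟩
    have hterm : ∀ (α : G) (x : X), (ρ α f) x ≠ 0 →
        ∀ c : (X →₀ F) → F, (∑ v ∈ B, c v • v = ρ α f) →
        ∃ v ∈ B, c v ≠ 0 ∧ v x ≠ 0 := by
      intro α x hx c hc
      rw [← hc] at hx
      have hex : ∃ v ∈ B, (c v • v) x ≠ 0 := by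
        by_contra hcon
        push_neg at hcon
        apply hx
        rw [Finsupp.finset_sum_apply]
        exact Finset.sum_eq_zero hcon
      obtain ⟨v, hvB, hvx⟩ := hex
      rw [Finsupp.smul_apply] at hvx
      exact ⟨v, hvB, fun h0 => hvx (by rw [h0, zero_smul]),
        fun h0 => hvx (by rw [h0, smul_zero])⟩
    have hcover : Finset.univ = B.biUnion (fun v => v.support) := by
      apply Finset.Subset.antisymm _ (Finset.subset_univ _)
      intro x _
      obtain ⟨x₀, hx₀⟩ := hSne
      obtain ⟨α, hα⟩ := MulAction.exists_smul_eq G x₀ x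
      have hx : x ∈ (ρ α f).support := by
        rw [hsupp α]
        exact hα ▸ Finset.smul_mem_smul_finset hx₀
      obtain ⟨c, -, hc⟩ := Submodule.mem_span_finset.1 (hmem α)
      obtain ⟨v, hvB, _, hvx⟩ := hterm α x (Finsupp.mem_support_iff.1 hx) c hc
      exact Finset.mem_biUnion.2 ⟨v, hvB, Finsupp.mem_support_iff.2 hvx⟩
    have hcount : (B.biUnion (fun v => v.support)).card = ∑ v ∈ B, v.support.card := by
      rw [← hcover, Finset.card_univ, Finset.sum_congr rfl hcardB, Finset.sum_const,
        smul_eq_mul, ← h]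
      ring
    have hdisjB : ∀ v ∈ B, ∀ w ∈ B, v ≠ w → Disjoint v.support w.support :=
      disj_of_card B (fun v => v.support) hcount
    have key : ∀ α : G, ∃ v ∈ B, ∃ c : F, c ≠ 0 ∧ ρ α f = c • v := by
      intro α
      obtain ⟨c, -, hc⟩ := Submodule.mem_span_finset.1 (hmem α)
      set N := B.filter (fun v => c v ≠ 0) with hN
      have hsubN : N ⊆ B := Finset.filter_subset _ _
      have hsupp_eq : (ρ α f).support = N.biUnion (fun v => v.support) := by
        apply Finset.Subset.antisymm
        · intro x hx
          obtain ⟨v, hvB, hcv, hvx⟩ := hterm α x (Finsupp.mem_support_iff.1 hx) c hc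
          exact Finset.mem_biUnion.2 ⟨v, Finset.mem_filter.2 ⟨hvB, hcv⟩,
            Finsupp.mem_support_iff.2 hvx⟩
        · intro x hx
          obtain ⟨v, hvN, hxv⟩ := Finset.mem_biUnion.1 hx
          obtain ⟨hvB, hcv⟩ := Finset.mem_filter.1 hvN
          rw [Finsupp.mem_support_iff, ← hc, Finsupp.finset_sum_apply]
          rw [Finset.sum_eq_single v ?_ (fun h' => absurd hvB h')]
          · rw [Finsupp.smul_apply, smul_eq_mul]
            exact mul_ne_zero hcv (Finsupp.mem_support_iff.1 hxv)
          · intro w hwB hwv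
            have hxw : x ∉ w.support :=
              Finset.disjoint_left.1 (hdisjB v hvB w hwB (Ne.symm hwv)) hxv
            rw [Finsupp.smul_apply, Finsupp.notMem_support_iff.1 hxw, smul_zero]
      have hcard1 : S.card = N.card * S.card := by
        have e1 : (ρ α f).support.card = S.card := by
          rw [hsupp, Finset.card_smul_finset]
        have e2 : (N.biUnion (fun v => v.support)).card = ∑ v ∈ N, v.support.card :=
          Finset.card_biUnion (fun v hv w hw hvw => hdisjB v (hsubN hv) w (hsubN hw) hvw)
        have e3 : ∑ v ∈ N, v.support.card = N.card * S.card := by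
          rw [Finset.sum_congr rfl (fun v hv => hcardB v (hsubN hv)), Finset.sum_const,
            smul_eq_mul]
        calc S.card = (ρ α f).support.card := e1.symm
          _ = (N.biUnion fun v => v.support).card := by rw [hsupp_eq]
          _ = ∑ v ∈ N, v.support.card := e2
          _ = N.card * S.card := e3
      have hN1 : N.card = 1 := by
        have h' : N.card * S.card = 1 * S.card := by rw [one_mul, ← hcard1]
        exact Nat.eq_of_mul_eq_mul_right (Nat.pos_of_ne_zero hs0) h'
      obtain ⟨v, hv⟩ := Finset.card_eq_one.1 hN1
      have hvN : v ∈ N := by rw [hv]; exact Finset.mem_singleton_self v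
      obtain ⟨hvB, hcv⟩ := Finset.mem_filter.1 hvN
      refine ⟨v, hvB, c v, hcv, ?_⟩
      rw [← hc]
      rw [Finset.sum_eq_single v ?_ (fun h' => absurd hvB h')]
      intro w hwB hwv
      have hwN : w ∉ N := by rw [hv]; simp [hwv]
      have : ¬ (c w ≠ 0) := fun hcw => hwN (Finset.mem_filter.2 ⟨hwB, hcw⟩)
      push_neg at this
      rw [this, zero_smul]
    have block : ∀ α β : G, α • S = β • S ∨ Disjoint (α • S) (β • S) := by
      intro α β
      obtain ⟨v, hvB, cv, hcv, hv⟩ := key α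
      obtain ⟨w, hwB, cw, hcw, hw⟩ := key β
      have hαS : α • S = v.support := by
        rw [← hsupp α, hv, Finsupp.support_smul_eq hcv]
      have hβS : β • S = w.support := by
        rw [← hsupp β, hw, Finsupp.support_smul_eq hcw]
      by_cases hvw : v = w
      · left; rw [hαS, hβS, hvw]
      · right; rw [hαS, hβS]; exact hdisjB v hvB w hwB hvw
    refine ⟨?_, ?_⟩
    · intro α β
      rcases block α β with h' | h'
      · left
        rw [← Finset.coe_smul_finset, ← Finset.coe_smul_finset, h']
      · right
        rw [← Finset.coe_smul_finset, ← Finset.coe_smul_finset, ← Finset.coe_inter,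
          Finset.disjoint_iff_inter_eq_empty.1 h', Finset.coe_empty]
    · intro x₀ hx₀f
      have hx₀ : x₀ ∈ S := Finsupp.mem_support_iff.2 hx₀f
      have hmain : ∀ β : G, β • x₀ ∈ (S : Set X) → ∃ c : Fˣ, ρ β f = (c : F) • f := by
        intro β hβ
        have hβ' : β • x₀ ∈ S := hβ
        have hβS : β • S = S := by
          rcases block β 1 with h' | h'
          · rw [h', one_smul]
          · exfalso
            have h1 : β • x₀ ∈ β • S := Finset.smul_mem_smul_finset hx₀
            have h2 : β • x₀ ∈ (1 : G) • S := by rw [one_smul]; exact hβ'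
            exact Finset.disjoint_left.1 h' h1 h2
        obtain ⟨v, hvB, cv, hcv, hv⟩ := key β
        obtain ⟨v₀, hv₀B, c₀, hc₀, hf₀⟩ := key 1
        rw [hρone] at hf₀
        have hsv : v.support = S := by
          rw [← Finsupp.support_smul_eq hcv, ← hv, hsupp, hβS]
        have hsv₀ : v₀.support = S := by
          rw [← Finsupp.support_smul_eq hc₀, ← hf₀]
        have hvv₀ : v = v₀ := by
          by_contra hne
          have hd := hdisjB v hvB v₀ hv₀B hne
          obtain ⟨y, hy⟩ := hSne
          have hy1 : y ∈ v.support := hsv ▸ hy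
          have hy2 : y ∈ v₀.support := hsv₀ ▸ hy
          exact Finset.disjoint_left.1 hd hy1 hy2
        refine ⟨Units.mk0 (cv * c₀⁻¹) (mul_ne_zero hcv (inv_ne_zero hc₀)), ?_⟩
        rw [hv, hvv₀, hf₀, smul_smul, Units.val_mk0, mul_assoc, inv_mul_cancel₀ hc₀, mul_one]
      set η : G → Fˣ := fun β => if h' : ∃ c : Fˣ, ρ β f = (c : F) • f then h'.choose else 1
        with hηdef
      have hspec : ∀ β : G, (∃ c : Fˣ, ρ β f = (c : F) • f) → ρ β f = ((η β : F)) • f := by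
        intro β hex
        rw [hηdef]
        simp only [dif_pos hex]
        exact hex.choose_spec
      refine ⟨η, ?_, fun β hβ => hspec β (hmain β hβ)⟩
      intro β γ hβ hγ
      have h1 := hspec β (hmain β hβ)
      have h2 := hspec γ (hmain γ hγ)
      have h3 : ρ (β * γ) f = ((η β * η γ : Fˣ) : F) • f := by
        rw [hρmul, h2, (ρ β).map_smul, h1, smul_smul, Units.val_mul, mul_comm]
      have hβγmem : (β * γ) • x₀ ∈ (S : Set X) := by
        have hsupp' : ((β * γ) • S) = S := by
          rw [← hsupp (β * γ), h3, Finsupp.support_smul_eq (Units.ne_zero _)]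
        have hm : (β * γ) • x₀ ∈ (β * γ) • S := Finset.smul_mem_smul_finset hx₀
        rw [hsupp'] at hm
        exact hm
      have h4 := hspec (β * γ) (hmain _ hβγmem)
      exact hcancel _ _ (h4.symm.trans h3)
  · rintro ⟨hblock, hη⟩
    have block : ∀ α β : G, α • S = β • S ∨ Disjoint (α • S) (β • S) := by
      intro α β
      rcases hblock α β with h' | h'
      · left
        apply Finset.coe_injective
        rw [Finset.coe_smul_finset, Finset.coe_smul_finset]; exact h'
      · right
        rw [Finset.disjoint_iff_inter_eq_empty]
        apply Finset.coe_injective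
        rw [Finset.coe_inter, Finset.coe_smul_finset, Finset.coe_smul_finset, h',
          Finset.coe_empty]
    obtain ⟨x₀, hx₀⟩ := hSne
    obtain ⟨η, hηmul, hηspec⟩ := hη x₀ (Finsupp.mem_support_iff.1 hx₀)
    set T : Finset (Finset X) := Finset.univ.image (fun α : G => α • S) with hTdef
    have hTcard : ∀ t ∈ T, t.card = S.card := by
      intro t ht
      obtain ⟨α, _, rfl⟩ := Finset.mem_image.1 ht
      exact Finset.card_smul_finset α S
    have hTdisj : ∀ t ∈ T, ∀ t' ∈ T, t ≠ t' → Disjoint t t' := by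
      intro t ht t' ht' htt'
      obtain ⟨α, _, rfl⟩ := Finset.mem_image.1 ht
      obtain ⟨β, _, rfl⟩ := Finset.mem_image.1 ht'
      exact (block α β).resolve_left htt'
    have hcover : Finset.univ = T.biUnion (fun t => t) := by
      apply Finset.Subset.antisymm _ (Finset.subset_univ _)
      intro x _
      obtain ⟨α, hα⟩ := MulAction.exists_smul_eq G x₀ x
      exact Finset.mem_biUnion.2 ⟨α • S, Finset.mem_image.2 ⟨α, Finset.mem_univ _, rfl⟩,
        hα ▸ Finset.smul_mem_smul_finset hx₀⟩
    have hcount : Fintype.card X = T.card * S.card := by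
      rw [← Finset.card_univ, hcover, Finset.card_biUnion hTdisj]
      rw [Finset.sum_congr rfl hTcard, Finset.sum_const, smul_eq_mul]
    set φ : Finset X → G := fun t => if h' : ∃ α : G, α • S = t then h'.choose else 1 with hφdef
    have hφspec : ∀ t ∈ T, φ t • S = t := by
      intro t ht
      obtain ⟨α, _, rfl⟩ := Finset.mem_image.1 ht
      have hex : ∃ β : G, β • S = α • S := ⟨α, rfl⟩
      rw [hφdef]
      simp only [dif_pos hex]
      exact hex.choose_spec
    set R : Finset (X →₀ F) := T.image (fun t => ρ (φ t) f) with hRdef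
    have hRsupp : ∀ t ∈ T, (ρ (φ t) f).support = t := by
      intro t ht
      rw [hsupp, hφspec t ht]
    have hinj : Set.InjOn (fun t => ρ (φ t) f) T := by
      intro t ht t' ht' hee
      rw [← hRsupp t ht, ← hRsupp t' ht']
      simp only at hee
      rw [hee]
    have hRcard : R.card = T.card := Finset.card_image_of_injOn hinj
    have hscal : ∀ α : G, ∃ t ∈ T, ∃ c : F, ρ α f = c • ρ (φ t) f := by
      intro α
      have ht : α • S ∈ T := Finset.mem_image.2 ⟨α, Finset.mem_univ _, rfl⟩
      have hts : φ (α • S) • S = α • S := hφspec _ ht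
      have hβS : ((φ (α • S))⁻¹ * α) • S = S := by
        have h5 := congrArg (fun u : Finset X => (φ (α • S))⁻¹ • u) hts
        rw [inv_smul_smul] at h5
        rw [mul_smul, ← h5]
      have hβmem : ((φ (α • S))⁻¹ * α) • x₀ ∈ (S : Set X) := by
        have hm : ((φ (α • S))⁻¹ * α) • x₀ ∈ ((φ (α • S))⁻¹ * α) • S :=
          Finset.smul_mem_smul_finset hx₀
        rw [hβS] at hm
        exact hm
      refine ⟨α • S, ht, (η ((φ (α • S))⁻¹ * α) : F), ?_⟩
      have hα : α = φ (α • S) * ((φ (α • S))⁻¹ * α) := (mul_inv_cancel_left _ _).symm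
      conv_lhs => rw [hα]
      rw [hρmul, hηspec _ hβmem, (ρ (φ (α • S))).map_smul]
    have hspan : Submodule.span F (Set.range fun α : G => ρ α f)
        = Submodule.span F (R : Set (X →₀ F)) := by
      apply le_antisymm
      · rw [Submodule.span_le]
        rintro _ ⟨α, rfl⟩
        obtain ⟨t, ht, c, heq⟩ := hscal α
        simp only
        rw [heq]
        exact Submodule.smul_mem _ c (Submodule.subset_span
          (Finset.mem_coe.2 (Finset.mem_image_of_mem _ ht)))
      · rw [Submodule.span_le]
        intro v hv
        obtain ⟨t, _, rfl⟩ := Finset.mem_image.1 (Finset.mem_coe.1 hv)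
        exact Submodule.subset_span ⟨φ t, rfl⟩
    have h0R : (0 : X →₀ F) ∉ R := by
      intro h0
      obtain ⟨t, ht, heq⟩ := Finset.mem_image.1 h0
      have hts := hRsupp t ht
      rw [heq] at hts
      have := hTcard t ht
      rw [← hts] at this
      simp at this
      exact hs0 this.symm
    have hdisjR : ∀ v ∈ R, ∀ w ∈ R, v ≠ w → Disjoint v.support w.support := by
      intro v hv w hw hvw
      obtain ⟨t, ht, rfl⟩ := Finset.mem_image.1 hv
      obtain ⟨t', ht', rfl⟩ := Finset.mem_image.1 hw
      have htt' : t ≠ t' := fun h' => hvw (by rw [h'])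
      rw [hRsupp t ht, hRsupp t' ht']
      exact hTdisj t ht t' ht' htt'
    have hli := li_of_disjoint R h0R hdisjR
    rw [hspan, finrank_span_finset_eq_card hli, hRcard, hcount]
    ring
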